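/- Let m ≥ 3 be an odd integer and suppose q = 2^m and a = 2^{(m+1)/2} (the case a = √(2q)). Then limsup_{X→∞} |M(X)|/2^{mX/2} = √2 − 2^{−m/2}. Since √2 − 2^{−m/2} > 1 for m ≥ 3, there exist infinitely many positive integers X (for instance all X ≡ 7 (mod 8)) with |M(X)| > q^{X/2}. -/
import Mathlib


open Real Filter

/-- The coefficient sequence `c_N` with `c_0 = 1`, `c_1 = a - q - 1`,
`c_2 = a*c_1 - q*c_0 + q`, and `c_N = a*c_{N-1} - q*c_{N-2}` for `N ≥ 3`;
these are the Taylor coefficients at `u = 0` of `(1-u)(1-qu)/(1-au+qu²)`,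
the reciprocal of the zeta function of an elliptic curve over `F_q` with
Frobenius trace `a`. -/
def mertC (q a : ℤ) : ℕ → ℤ
  | 0 => 1
  | 1 => a - q - 1
  | 2 => a * (a - q - 1) - q * 1 + q
  | (N + 3) => a * mertC q a (N + 2) - q * mertC q a (N + 1)

/-- `M(X) = ∑_{N=0}^{X-1} c_N`, the Mertens summatory function of the
Möbius function of an elliptic curve over `F_q` with Frobenius trace `a`. -/
def mertM (q a : ℤ) (X : ℕ) : ℤ := ∑ N ∈ Finset.range X, mertC q a N

lemma mertM_succ (q a : ℤ) (n : ℕ) : mertM q a (n+1) = mertM q a n + mertC q a n :=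
  Finset.sum_range_succ _ _

lemma mertM_rec (q a : ℤ) (X : ℕ) :
    mertM q a (X+3) = a * mertM q a (X+2) - q * mertM q a (X+1) := by
  induction X with
  | zero => simp [mertM, Finset.sum_range_succ, mertC]; ring
  | succ n ih =>
    have h1 : mertM q a (n+4) = mertM q a (n+3) + mertC q a (n+3) := mertM_succ q a (n+3)
    have h2 : mertM q a (n+3) = mertM q a (n+2) + mertC q a (n+2) := mertM_succ q a (n+2)
    have h3 : mertM q a (n+2) = mertM q a (n+1) + mertC q a (n+1) := mertM_succ q a (n+1)
    have hc : mertC q a (n+3) = a * mertC q a (n+2) - q * mertC q a (n+1) := rfl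
    show mertM q a (n+4) = a * mertM q a (n+3) - q * mertM q a (n+2)
    linear_combination h1 + hc - a * h2 + q * h3 + ih

lemma mertM_period (q a : ℤ) (h2q : a^2 = 2*q) (X : ℕ) :
    mertM q a (X+5) = -q^2 * mertM q a (X+1) := by
  have r1 := mertM_rec q a (X+2)
  have r2 := mertM_rec q a (X+1)
  have r3 := mertM_rec q a X
  linear_combination r1 + a * r2 + (a^2 - q) * r3 +
    (a * mertM q a (X+2) - q * mertM q a (X+1)) * h2q

lemma mertM_pow (q a : ℤ) (h2q : a^2 = 2*q) (k r : ℕ) :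
    mertM q a (4*k + r + 1) = (-q^2)^k * mertM q a (r+1) := by
  induction k with
  | zero => simp
  | succ n ih =>
    have : 4*(n+1) + r + 1 = (4*n + r) + 5 := by ring
    rw [this, mertM_period q a h2q (4*n+r), ih]
    ring

lemma mertM_one (q a : ℤ) : mertM q a 1 = 1 := by
  simp [mertM, Finset.sum_range_succ, mertC]

lemma mertM_two (q a : ℤ) : mertM q a 2 = a - q := by
  simp [mertM, Finset.sum_range_succ, mertC]

lemma mertM_three (q a : ℤ) (h2q : a^2 = 2*q) : mertM q a 3 = q - a*q := by
  simp [mertM, Finset.sum_range_succ, mertC]; linear_combination h2q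

lemma mertM_four (q a : ℤ) (h2q : a^2 = 2*q) : mertM q a 4 = -q^2 := by
  simp [mertM, Finset.sum_range_succ, mertC]; linear_combination (a - q) * h2q

lemma ratio_eq (m : ℕ) (q a : ℤ) (hq : q = 2^m) (h2q : a^2 = 2*q) (k r : ℕ) :
    |(mertM q a (4*k+r+1) : ℝ)| / (2:ℝ)^((m:ℝ)*((4*k+r+1 : ℕ):ℝ)/2)
      = |(mertM q a (r+1):ℝ)| / (2:ℝ)^((m:ℝ)*((r+1:ℕ):ℝ)/2) := by
  have hM := mertM_pow q a h2q k r
  subst hq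
  have hnum : |(mertM (2^m) a (4*k+r+1) : ℝ)| = (2:ℝ)^(2*m*k) * |(mertM (2^m) a (r+1):ℝ)| := by
    rw [hM]
    push_cast
    rw [abs_mul, abs_pow, abs_neg, abs_pow, abs_pow, abs_two, ← pow_mul, ← pow_mul]
    ring_nf
  have hsplit : (m:ℝ)*((4*k+r+1:ℕ):ℝ)/2 = ((2*m*k : ℕ):ℝ) + (m:ℝ)*((r+1:ℕ):ℝ)/2 := by
    push_cast; ring
  rw [hnum, hsplit, Real.rpow_add two_pos, Real.rpow_natCast]
  rw [mul_div_mul_left]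
  positivity

theorem mertens_limsup_sqrt_2q (m : ℕ) (hm : 3 ≤ m) (hodd : Odd m) (q a : ℤ)
    (hq : q = 2 ^ m) (ha : a = 2 ^ ((m + 1) / 2)) :
    Filter.limsup (fun X : ℕ => |(mertM q a X : ℝ)| / (2 : ℝ) ^ ((m : ℝ) * (X : ℝ) / 2))
        Filter.atTop = Real.sqrt 2 - (2 : ℝ) ^ (-(m : ℝ) / 2) ∧
    Real.sqrt 2 - (2 : ℝ) ^ (-(m : ℝ) / 2) > 1 ∧
    ∀ X : ℕ, 1 ≤ X → X % 8 = 7 →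
      |(mertM q a X : ℝ)| > (q : ℝ) ^ ((X : ℝ) / 2) := by
  have hm2 : 2 * ((m + 1) / 2) = m + 1 := by
    rcases hodd with ⟨j, rfl⟩; omega
  have h2q : a ^ 2 = 2 * q := by
    rw [hq, ha, ← pow_mul, mul_comm ((m+1)/2) 2, hm2, pow_succ]
    ring
  set L : ℝ := Real.sqrt 2 - (2 : ℝ) ^ (-(m : ℝ) / 2) with hL
  set G : ℕ → ℝ := fun X : ℕ => |(mertM q a X : ℝ)| / (2 : ℝ) ^ ((m : ℝ) * (X : ℝ) / 2) with hG
  clear_value L G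
  -- basic real facts
  have hqR : ((q : ℤ) : ℝ) = (2:ℝ) ^ ((m:ℕ):ℝ) := by
    rw [hq]; push_cast; rw [Real.rpow_natCast]
  have haR : ((a : ℤ) : ℝ) = (2:ℝ) ^ (((m:ℝ)+1)/2) := by
    rw [ha]; push_cast
    rw [← Real.rpow_natCast 2 ((m+1)/2)]
    congr 1
    have h2 : ((2 * ((m+1)/2) : ℕ) : ℝ) = (m:ℝ)+1 := by rw [hm2]; push_cast; ring
    push_cast at h2
    linarith
  -- L > 1
  have hL1 : 1 < L := by
    have h1 : (2:ℝ) ^ (-(m:ℝ)/2) ≤ (2:ℝ) ^ (-(3:ℝ)/2) := by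
      apply Real.rpow_le_rpow_of_exponent_le one_le_two
      have : (3:ℝ) ≤ (m:ℝ) := by exact_mod_cast hm
      linarith
    have h2 : (2:ℝ) ^ (-(3:ℝ)/2) = 1 / (2 * Real.sqrt 2) := by
      rw [show -(3:ℝ)/2 = -(3/2 : ℝ) by norm_num,
        Real.rpow_neg (by norm_num : (0:ℝ) ≤ 2), one_div]
      congr 1
      rw [show (3:ℝ)/2 = 1 + 1/2 by norm_num, Real.rpow_add two_pos, Real.rpow_one,
        ← Real.sqrt_eq_rpow]
    have hs : Real.sqrt 2 ^ 2 = 2 := Real.sq_sqrt (by norm_num)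
    have hs0 : 0 < Real.sqrt 2 := Real.sqrt_pos.mpr (by norm_num)
    have hs32 : Real.sqrt 2 < 3/2 := by nlinarith
    have : 1 / (2 * Real.sqrt 2) < Real.sqrt 2 - 1 := by
      rw [div_lt_iff₀ (by positivity)]
      nlinarith
    rw [hL]; linarith
  -- the r = 2 value equals L exactly
  have hv2 : |(mertM q a 3 : ℝ)| / (2:ℝ)^((m:ℝ)*((3:ℕ):ℝ)/2) = L := by
    rw [mertM_three q a h2q]
    have hq1 : (1:ℝ) ≤ (a:ℝ) := by
      rw [haR]; apply Real.one_le_rpow one_le_two; positivity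
    have hqpos : (0:ℝ) < (q:ℝ) := by rw [hqR]; positivity
    have habs : |((q - a*q : ℤ):ℝ)| = (q:ℝ) * ((a:ℝ) - 1) := by
      push_cast
      rw [show (q:ℝ) - (a:ℝ)*(q:ℝ) = -((q:ℝ) * ((a:ℝ) - 1)) by ring, abs_neg,
        abs_of_nonneg (by nlinarith)]
    rw [habs, hqR, haR]
    have hexp3 : (m:ℝ)*((3:ℕ):ℝ)/2 = 3*(m:ℝ)/2 := by push_cast; ring
    rw [hexp3]
    rw [hL, mul_sub, mul_one, ← Real.rpow_add two_pos, sub_div,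
      ← Real.rpow_sub two_pos, ← Real.rpow_sub two_pos, Real.sqrt_eq_rpow]
    have e1 : (m:ℝ) + ((m:ℝ)+1)/2 - 3*(m:ℝ)/2 = 1/2 := by ring
    have e2 : (m:ℝ) - 3*(m:ℝ)/2 = -(m:ℝ)/2 := by ring
    rw [e1, e2]
  -- the four residue values
  have hval : ∀ r : ℕ, r < 4 →
      |(mertM q a (r+1):ℝ)| / (2:ℝ)^((m:ℝ)*((r+1:ℕ):ℝ)/2) ≤ L := by
    intro r hr
    interval_cases r
    · -- r = 0 : |M 1| = 1, value 2^{-m/2} ≤ 1 < L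
      rw [show (0:ℕ)+1 = 1 from rfl, mertM_one]
      have : |((1:ℤ):ℝ)| = 1 := by norm_num
      rw [this]
      have hle1 : (1:ℝ) / (2:ℝ)^((m:ℝ)*((1:ℕ):ℝ)/2) ≤ 1 := by
        rw [div_le_one (by positivity)]
        apply Real.one_le_rpow one_le_two
        positivity
      linarith
    · -- r = 1 : |M 2| = q - a ≤ q = 2^m, value ≤ 1 < L
      rw [show (1:ℕ)+1 = 2 from rfl, mertM_two]
      have hexp : (m:ℝ)*((2:ℕ):ℝ)/2 = ((m:ℕ):ℝ) := by push_cast; ring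
      rw [hexp]
      have ha0 : (0:ℝ) ≤ (a:ℝ) := by rw [haR]; positivity
      have haq : (a:ℝ) ≤ (q:ℝ) := by
        rw [haR, hqR]
        apply Real.rpow_le_rpow_of_exponent_le one_le_two
        have : (3:ℝ) ≤ (m:ℝ) := by exact_mod_cast hm
        linarith
      have habs : |((a - q : ℤ):ℝ)| ≤ (2:ℝ)^((m:ℕ):ℝ) := by
        rw [← hqR]
        push_cast
        rw [abs_sub_comm, abs_of_nonneg (by linarith)]
        linarith
      have : |((a - q : ℤ):ℝ)| / (2:ℝ)^((m:ℕ):ℝ) ≤ 1 := by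
        rw [div_le_one (by positivity)]
        exact habs
      linarith
    · -- r = 2 : the maximum, value = L exactly
      rw [show (2:ℕ)+1 = 3 from rfl]
      exact le_of_eq hv2
    · -- r = 3 : |M 4| = q², value = 1 < L
      rw [show (3:ℕ)+1 = 4 from rfl, mertM_four q a h2q]
      have hexp4 : (m:ℝ)*((4:ℕ):ℝ)/2 = (2:ℝ)*(m:ℝ) := by push_cast; ring
      have hq0 : (0:ℝ) ≤ ((q:ℤ):ℝ) := by rw [hqR]; positivity
      have habs : |((-q^2 : ℤ):ℝ)| = (2:ℝ)^((2:ℝ)*(m:ℝ)) := by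
        push_cast
        rw [abs_neg, abs_pow, abs_of_nonneg hq0, hqR,
          ← Real.rpow_natCast ((2:ℝ)^((m:ℕ):ℝ)) 2,
          ← Real.rpow_mul (by norm_num : (0:ℝ) ≤ 2)]
        congr 1
        push_cast; ring
      rw [habs, hexp4]
      have : (2:ℝ)^((2:ℝ)*(m:ℝ)) / (2:ℝ)^((2:ℝ)*(m:ℝ)) = 1 := by
        apply div_self; positivity
      rw [this]
      linarith
  -- pointwise bound and frequent equality
  have hle : ∀ X : ℕ, 1 ≤ X → G X ≤ L := by
    intro X hX
    obtain ⟨k, r, hr4, rfl⟩ : ∃ k r, r < 4 ∧ X = 4*k + r + 1 :=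
      ⟨(X-1)/4, (X-1)%4, by omega, by omega⟩
    simp only [hG]
    push_cast
    rw [show ((4:ℝ)*(k:ℝ) + (r:ℝ) + 1) = ((4*k+r+1 : ℕ):ℝ) by push_cast; ring]
    rw [ratio_eq m q a hq h2q k r]
    exact hval r hr4
  have heq : ∀ X : ℕ, X % 4 = 3 → G X = L := by
    intro X h4
    obtain ⟨k, rfl⟩ : ∃ k, X = 4*k + 2 + 1 := ⟨X/4, by omega⟩
    simp only [hG]
    push_cast
    rw [show ((4:ℝ)*(k:ℝ) + 2 + 1) = ((4*k+2+1 : ℕ):ℝ) by push_cast; ring]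
    rw [ratio_eq m q a hq h2q k 2, show (2:ℕ)+1 = 3 by norm_num]
    exact hv2
  have hble : ∀ᶠ X in atTop, G X ≤ L := by
    filter_upwards [eventually_ge_atTop 1] with X hX using hle X hX
  have hbdd : IsBoundedUnder (· ≤ ·) atTop G := isBoundedUnder_of_eventually_le hble
  have hfreq : ∃ᶠ X in atTop, L ≤ G X := by
    rw [frequently_atTop]
    intro N
    exact ⟨4*N + 3, by omega, le_of_eq (heq (4*N+3) (by omega)).symm⟩
  have hco : IsCoboundedUnder (· ≤ ·) atTop G := IsCoboundedUnder.of_frequently_ge hfreq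
  have hlimsup : limsup G atTop = L :=
    le_antisymm (limsup_le_of_le hco hble) (le_limsup_of_frequently_le hfreq hbdd)
  refine ⟨hlimsup, hL1, ?_⟩
  intro X hX1 hX8
  have h4 : X % 4 = 3 := by omega
  have hGX : G X = L := heq X h4
  have hpos : (0:ℝ) < (2:ℝ)^((m:ℝ)*(X:ℝ)/2) := by positivity
  have hqpow : ((q:ℤ):ℝ)^((X:ℝ)/2) = (2:ℝ)^((m:ℝ)*(X:ℝ)/2) := by
    rw [hqR, ← Real.rpow_mul (by norm_num : (0:ℝ) ≤ 2)]
    congr 1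
    push_cast; ring
  rw [hqpow]
  have hM : |(mertM q a X : ℝ)| = G X * (2:ℝ)^((m:ℝ)*(X:ℝ)/2) := by
    simp only [hG]
    rw [div_mul_cancel₀ _ (ne_of_gt hpos)]
  rw [hM, hGX]
  exact (lt_mul_iff_one_lt_left hpos).mpr hL1
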